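/- Let P ⊂ ℝ^d and s > 0, and let C be the set of points p ∈ P such that B(p, s) ∩ P contains at most m points and the ball B(p, s/(m+2)) around p contains a point of P other than p. Then every point of C lies in a connected component of the (s/(m+2))-connectivity clustering of P that has at least 2 and at most m points. -/
import Mathlib


/-- Adjacency at threshold `r`: two points of `P` at distance at most `r`. -/
def connRel {X : Type*} [MetricSpace X] (P : Set X) (r : ℝ) (a b : X) : Prop :=
  a ∈ P ∧ b ∈ P ∧ dist a b ≤ r

/-- The connected component of `p` in the `r`-connectivity graph on `P`. -/
def component {X : Type*} [MetricSpace X] (P : Set X) (r : ℝ) (p : X) : Set X :=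
  {q ∈ P | Relation.ReflTransGen (connRel P r) p q}

/-- Let `P ⊂ ℝ^d` be finite and `s > 0`. If `p ∈ P` is such that the ball `B(p, s)` contains
at most `m` points of `P` and the ball `B(p, s/(m+2))` contains a point of `P` other than
`p`, then the connected component of `p` in the `s/(m+2)`-connectivity clustering of `P` has
at least `2` and at most `m` points. -/
theorem stmt19 (d : ℕ) (P : Set (EuclideanSpace ℝ (Fin d))) (hfin : P.Finite)
    (s : ℝ) (hs : 0 < s) (m : ℕ) (p : EuclideanSpace ℝ (Fin d)) (hp : p ∈ P)
    (hball : ({q ∈ P | dist p q ≤ s}).ncard ≤ m)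
    (hnontriv : ∃ q ∈ P, q ≠ p ∧ dist p q ≤ s / ((m : ℝ) + 2)) :
    2 ≤ (component P (s / ((m : ℝ) + 2)) p).ncard ∧
      (component P (s / ((m : ℝ) + 2)) p).ncard ≤ m := by
  obtain ⟨q, hqP, hqne, hqd⟩ := hnontriv
  set r := s / ((m : ℝ) + 2) with hr_def
  have hm2 : (0:ℝ) < (m : ℝ) + 2 := by positivity
  have hr : 0 < r := div_pos hs hm2
  -- annulus lemma: along any reachable point, each level below its distance has a
  -- reachable point in the annulus [v, v + r)
  have key : ∀ x, Relation.ReflTransGen (connRel P r) p x →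
      ∀ v : ℝ, 0 ≤ v → v ≤ dist p x →
      ∃ y, y ∈ P ∧ Relation.ReflTransGen (connRel P r) p y ∧
        v ≤ dist p y ∧ dist p y < v + r := by
    intro x hx
    induction hx with
    | refl =>
      intro v hv0 hvd
      have hv : v = 0 := le_antisymm (by simpa using hvd) hv0
      exact ⟨p, hp, Relation.ReflTransGen.refl, by simp [hv], by simp [hv]; linarith⟩
    | @tail b c h1 h2 ih =>
      intro v hv0 hvc
      obtain ⟨hbP, hcP, hbc⟩ := h2
      by_cases hcase : v ≤ dist p b
      · exact ih v hv0 hcase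
      · push_neg at hcase
        refine ⟨c, hcP, Relation.ReflTransGen.tail h1 ⟨hbP, hcP, hbc⟩, hvc, ?_⟩
        calc dist p c ≤ dist p b + dist b c := dist_triangle _ _ _
          _ < v + r := by linarith
  have hms : ((m:ℝ) + 2) * r = s := by rw [hr_def]; field_simp
  have hmr : ((m:ℝ) + 1) * r ≤ s := by nlinarith
  -- every reachable point lies within distance s of p
  have hreach_le : ∀ x, Relation.ReflTransGen (connRel P r) p x → dist p x ≤ s := by
    intro x hx
    by_contra hxs
    push_neg at hxs
    have hchoice : ∀ k : Fin (m + 2), ∃ y, y ∈ {q ∈ P | dist p q ≤ s} ∧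
        ((k : ℕ) : ℝ) * r ≤ dist p y ∧ dist p y < ((k : ℕ) : ℝ) * r + r := by
      intro k
      have hk : ((k : ℕ) : ℝ) ≤ (m : ℝ) + 1 := by
        have := k.isLt
        have : (k : ℕ) ≤ m + 1 := by omega
        exact_mod_cast this
      have hkr : ((k : ℕ) : ℝ) * r ≤ dist p x := by nlinarith
      obtain ⟨y, hyP, hyR, hy1, hy2⟩ := key x hx (((k : ℕ) : ℝ) * r) (by positivity) hkr
      refine ⟨y, ⟨hyP, ?_⟩, hy1, hy2⟩
      have : dist p y < (((k : ℕ) : ℝ) + 1) * r := by nlinarith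
      nlinarith
    choose g hg1 hg2 hg3 using hchoice
    have hSfin : ({q ∈ P | dist p q ≤ s}).Finite := hfin.subset (fun y hy => hy.1)
    have hlt : ∀ a b : Fin (m + 2), (a : ℕ) < (b : ℕ) → g a ≠ g b := by
      intro a b hab hgeq
      have hcast : ((a : ℕ) : ℝ) + 1 ≤ ((b : ℕ) : ℝ) := by exact_mod_cast hab
      have h1 : dist p (g a) < ((b : ℕ) : ℝ) * r := by
        have := hg3 a; nlinarith
      rw [hgeq] at h1
      exact absurd (hg2 b) (not_le.mpr h1)
    have hinj : Function.Injective
        (fun k : Fin (m + 2) => (⟨g k, hg1 k⟩ : {q ∈ P | dist p q ≤ s})) := by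
      intro a b hab
      simp only [Subtype.mk.injEq] at hab
      rcases lt_trichotomy (a : ℕ) (b : ℕ) with h | h | h
      · exact absurd hab (hlt a b h)
      · exact Fin.ext h
      · exact absurd hab.symm (hlt b a h)
    have hfin2 : Finite ↥{q ∈ P | dist p q ≤ s} := hSfin.to_subtype
    have hcard := Nat.card_le_card_of_injective _ hinj
    rw [Nat.card_eq_fintype_card, Fintype.card_fin, Nat.card_coe_set_eq] at hcard
    omega
  have hSfin : ({q ∈ P | dist p q ≤ s}).Finite := hfin.subset (fun y hy => hy.1)
  have hcfin : (component P r p).Finite := hfin.subset (fun y hy => hy.1)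
  constructor
  · have hsub : ({p, q} : Set (EuclideanSpace ℝ (Fin d))) ⊆ component P r p := by
      intro y hy
      rcases hy with hy | hy
      · subst hy; exact ⟨hp, Relation.ReflTransGen.refl⟩
      · simp only [Set.mem_singleton_iff] at hy
        subst hy
        exact ⟨hqP, Relation.ReflTransGen.single ⟨hp, hqP, hqd⟩⟩
    have h2 : ({p, q} : Set (EuclideanSpace ℝ (Fin d))).ncard = 2 :=
      Set.ncard_pair (Ne.symm hqne)
    calc 2 = ({p, q} : Set (EuclideanSpace ℝ (Fin d))).ncard := h2.symm
      _ ≤ (component P r p).ncard := Set.ncard_le_ncard hsub hcfin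
  · have hsub : component P r p ⊆ {q ∈ P | dist p q ≤ s} :=
      fun y hy => ⟨hy.1, hreach_le y hy.2⟩
    exact (Set.ncard_le_ncard hsub hSfin).trans hball
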